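/- Let h solve the ellipsoid ODE with Lyapunov function W(x) = h'²(a²cos²h+sin²h)/(a²sech²x+tanh²x) + d(d+k−2)sin²h (k ≥ 3). If W(0) > d(d+k−2), then W(x) > d(d+k−2) for all x ≥ 0, and consequently h'(x) ≠ 0 for all x ≥ 0. -/

import Mathlib

set_option maxHeartbeats 1600000 in
/-- If h solves the ellipsoid ODE and the Lyapunov function satisfies
W(0) > d(d+k−2), then W(x) > d(d+k−2) and h'(x) ≠ 0 for all x ≥ 0. -/
theorem stmt15 (k d : ℕ) (hk : 3 ≤ k) (hd : 1 ≤ d) (a : ℝ) (ha : a ≠ 0)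
    (h : ℝ → ℝ) (hreg : ContDiff ℝ 2 h)
    (hODE : ∀ x : ℝ, deriv (deriv h) x
        + (1 / 2) * (1 - a ^ 2) * Real.sin (2 * h x)
            / (a ^ 2 * Real.cos (h x) ^ 2 + Real.sin (h x) ^ 2) * (deriv h x) ^ 2
        - (1 - a ^ 2) * Real.tanh x / (a ^ 2 + Real.sinh x ^ 2) * deriv h x
        - ((k : ℝ) - 2) * Real.tanh x * deriv h x
        + ((d : ℝ) * ((d : ℝ) + (k : ℝ) - 2) / 2)
            * (a ^ 2 * (1 / Real.cosh x) ^ 2 + Real.tanh x ^ 2)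
            / (a ^ 2 * Real.cos (h x) ^ 2 + Real.sin (h x) ^ 2) * Real.sin (2 * h x) = 0)
    (W : ℝ → ℝ)
    (hW : ∀ x : ℝ, W x = (deriv h x) ^ 2 * (a ^ 2 * Real.cos (h x) ^ 2 + Real.sin (h x) ^ 2)
        / (a ^ 2 * (1 / Real.cosh x) ^ 2 + Real.tanh x ^ 2)
        + (d : ℝ) * ((d : ℝ) + (k : ℝ) - 2) * Real.sin (h x) ^ 2)
    (hW0 : (d : ℝ) * ((d : ℝ) + (k : ℝ) - 2) < W 0) :
    ∀ x : ℝ, 0 ≤ x → (d : ℝ) * ((d : ℝ) + (k : ℝ) - 2) < W x ∧ deriv h x ≠ 0 := by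
  set D : ℝ := (d : ℝ) * ((d : ℝ) + (k : ℝ) - 2) with hD
  have hDpos : 0 < D := by
    have h1 : (1 : ℝ) ≤ (d : ℝ) := by exact_mod_cast hd
    have h2 : (3 : ℝ) ≤ (k : ℝ) := by exact_mod_cast hk
    have : (0 : ℝ) < (d : ℝ) + (k : ℝ) - 2 := by linarith
    positivity
  have hk2 : (0 : ℝ) ≤ (k : ℝ) - 2 := by
    have h2 : (3 : ℝ) ≤ (k : ℝ) := by exact_mod_cast hk
    linarith
  -- positivity facts
  have hPpos : ∀ x : ℝ, 0 < a ^ 2 * Real.cos (h x) ^ 2 + Real.sin (h x) ^ 2 := by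
    intro x
    have ha2 : 0 < a ^ 2 := by positivity
    rcases eq_or_ne (Real.sin (h x)) 0 with hs | hs
    · have hc : Real.cos (h x) ^ 2 = 1 := by
        have := Real.sin_sq_add_cos_sq (h x); rw [hs] at this; nlinarith
      rw [hc, hs]; nlinarith
    · have hs2 : 0 < Real.sin (h x) ^ 2 := by positivity
      nlinarith [mul_nonneg ha2.le (sq_nonneg (Real.cos (h x)))]
  have hCpos : ∀ x : ℝ, 0 < Real.cosh x := fun x => Real.cosh_pos x
  have hMpos : ∀ x : ℝ, 0 < a ^ 2 + Real.sinh x ^ 2 := by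
    intro x
    have ha2 : 0 < a ^ 2 := by positivity
    nlinarith [sq_nonneg (Real.sinh x)]
  -- differentiability of h and deriv h
  have hdh : Differentiable ℝ h := hreg.differentiable (by norm_num)
  have hdh2 : ContDiff ℝ 1 (deriv h) := by
    have h2 : ContDiff ℝ (1 + 1 : ℕ) h := by exact_mod_cast hreg
    exact (contDiff_succ_iff_deriv.mp h2).2.2
  have hdh2' : Differentiable ℝ (deriv h) := hdh2.differentiable (by norm_num)
  -- W equals the cleaned-up function G
  have hWG : ∀ x : ℝ, W x = (deriv h x) ^ 2 * (a ^ 2 * Real.cos (h x) ^ 2 + Real.sin (h x) ^ 2)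
      * Real.cosh x ^ 2 / (a ^ 2 + Real.sinh x ^ 2) + D * Real.sin (h x) ^ 2 := by
    intro x
    rw [hW x, Real.tanh_eq_sinh_div_cosh]
    have hC := (hCpos x).ne'
    have hM := (hMpos x).ne'
    have hQ : a ^ 2 * (1 / Real.cosh x) ^ 2 + (Real.sinh x / Real.cosh x) ^ 2 ≠ 0 := by
      have : 0 < a ^ 2 * (1 / Real.cosh x) ^ 2 + (Real.sinh x / Real.cosh x) ^ 2 := by
        have := hCpos x
        positivity
      exact this.ne'
    field_simp
  -- the derivative of W
  have hW' : ∀ x : ℝ, HasDerivAt W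
      (2 * ((k : ℝ) - 2) * Real.sinh x * Real.cosh x * (deriv h x) ^ 2
        * (a ^ 2 * Real.cos (h x) ^ 2 + Real.sin (h x) ^ 2) / (a ^ 2 + Real.sinh x ^ 2)) x := by
    intro x
    have hfun : W = fun y => (deriv h y) ^ 2 * (a ^ 2 * Real.cos (h y) ^ 2 + Real.sin (h y) ^ 2)
        * Real.cosh y ^ 2 / (a ^ 2 + Real.sinh y ^ 2) + D * Real.sin (h y) ^ 2 :=
      funext hWG
    rw [hfun]
    have hh : HasDerivAt h (deriv h x) x := (hdh x).hasDerivAt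
    have hq : HasDerivAt (deriv h) (deriv (deriv h) x) x := (hdh2' x).hasDerivAt
    have hsin : HasDerivAt (fun y => Real.sin (h y)) (Real.cos (h x) * deriv h x) x :=
      (Real.hasDerivAt_sin (h x)).comp x hh
    have hcos : HasDerivAt (fun y => Real.cos (h y)) (-Real.sin (h x) * deriv h x) x :=
      (Real.hasDerivAt_cos (h x)).comp x hh
    have hP : HasDerivAt (fun y => a ^ 2 * Real.cos (h y) ^ 2 + Real.sin (h y) ^ 2)
        (a ^ 2 * (2 * Real.cos (h x) ^ 1 * (-Real.sin (h x) * deriv h x))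
          + 2 * Real.sin (h x) ^ 1 * (Real.cos (h x) * deriv h x)) x :=
      ((hcos.pow 2).const_mul (a ^ 2)).add (hsin.pow 2)
    have hp2 : HasDerivAt (fun y => (deriv h y) ^ 2)
        (2 * (deriv h x) ^ 1 * deriv (deriv h) x) x := hq.pow 2
    have hch : HasDerivAt (fun y => Real.cosh y ^ 2)
        (2 * Real.cosh x ^ 1 * Real.sinh x) x := (Real.hasDerivAt_cosh x).pow 2
    have hM : HasDerivAt (fun y => a ^ 2 + Real.sinh y ^ 2)
        (2 * Real.sinh x ^ 1 * Real.cosh x) x :=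
      ((Real.hasDerivAt_sinh x).pow 2).const_add (a ^ 2)
    have hN := (hp2.mul hP).mul hch
    have hG := (hN.div hM (hMpos x).ne').add ((hsin.pow 2).const_mul D)
    refine hG.congr_deriv (Eq.symm ?_)
    norm_num only [Pi.mul_apply]
    -- algebraic identity using the ODE and cosh² = sinh² + 1
    have hode := hODE x
    rw [Real.tanh_eq_sinh_div_cosh, Real.sin_two_mul] at hode
    have hC := (hCpos x).ne'
    have hM0 := (hMpos x).ne'
    have hP0 := (hPpos x).ne'
    have hcsq : Real.cosh x ^ 2 = Real.sinh x ^ 2 + 1 := Real.cosh_sq x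
    set s := Real.sin (h x)
    set c := Real.cos (h x)
    set S := Real.sinh x
    set C := Real.cosh x
    set p := deriv h x
    set q := deriv (deriv h) x
    linear_combination (norm := (field_simp; ring1))
      (-(2 * p * (a ^ 2 * c ^ 2 + s ^ 2) * C ^ 2 / (a ^ 2 + S ^ 2))) * hode
      + (2 * p ^ 2 * (a ^ 2 * c ^ 2 + s ^ 2) * S * C / (a ^ 2 + S ^ 2) ^ 2) * hcsq
  -- monotonicity of W on [0, ∞)
  have hmono : MonotoneOn W (Set.Ici (0 : ℝ)) := by
    apply monotoneOn_of_deriv_nonneg (convex_Ici 0)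
    · exact fun x _ => ((hW' x).continuousAt).continuousWithinAt
    · exact fun x _ => ((hW' x).differentiableAt).differentiableWithinAt
    · intro x hx
      rw [interior_Ici] at hx
      rw [(hW' x).deriv]
      have hS : 0 ≤ Real.sinh x := Real.sinh_nonneg_iff.mpr (le_of_lt hx)
      have h1 : 0 ≤ 2 * ((k : ℝ) - 2) * Real.sinh x * Real.cosh x * (deriv h x) ^ 2
          * (a ^ 2 * Real.cos (h x) ^ 2 + Real.sin (h x) ^ 2) := by
        have := (hCpos x).le
        have := (hPpos x).le
        have := sq_nonneg (deriv h x)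
        positivity
      exact div_nonneg h1 (hMpos x).le
  intro x hx
  have hle : W 0 ≤ W x := hmono Set.self_mem_Ici hx hx
  have hWx : D < W x := lt_of_lt_of_le hW0 hle
  refine ⟨hWx, ?_⟩
  intro hp0
  have hsin : Real.sin (h x) ^ 2 ≤ 1 := Real.sin_sq_le_one (h x)
  have : W x ≤ D := by
    rw [hW x, hp0]
    have : D * Real.sin (h x) ^ 2 ≤ D * 1 := by
      exact mul_le_mul_of_nonneg_left hsin hDpos.le
    simpa using this
  linarith
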